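/- arXiv:1912.01280 — 2 statements merged into one kernel-verified Lean document; each statement's English description precedes it below -/
import Mathlib

section
/- Let Y ~ N(μ,σ²) with density f, and let μ_n := E[T_n(Y)·1_{[−1,1]}(Y)] and μ'_n := E[T'_n(Y)·1_{[−1,1]}(Y)] be the truncated generalized Chebyshev moments. Then for n ≥ 1, E[Y·T_n(Y)·1_{[−1,1]}(Y)] = μ·μ_n − σ²·(T_n(1)f(1) − T_n(−1)f(−1) − μ'_n). -/
open Real MeasureTheory Polynomial

theorem normal_truncated_chebyshev_moment_identity (m σ : ℝ) (hσ : 0 < σ) (f : ℝ → ℝ)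
    (hf : ∀ x, f x = (Real.sqrt (2 * π) * σ)⁻¹ * Real.exp (-(x - m) ^ 2 / (2 * σ ^ 2)))
    (n : ℕ) (hn : 1 ≤ n)
    (μn μn' : ℝ)
    (hμn : μn = ∫ x in Set.Icc (-1 : ℝ) 1, (Polynomial.Chebyshev.T ℝ n).eval x * f x)
    (hμn' : μn' = ∫ x in Set.Icc (-1 : ℝ) 1,
        (Polynomial.derivative (Polynomial.Chebyshev.T ℝ n)).eval x * f x) :
    (∫ x in Set.Icc (-1 : ℝ) 1, x * (Polynomial.Chebyshev.T ℝ n).eval x * f x) =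
      m * μn - σ ^ 2 * ((Polynomial.Chebyshev.T ℝ n).eval 1 * f 1 -
        (Polynomial.Chebyshev.T ℝ n).eval (-1) * f (-1) - μn') := by
  set T : ℝ[X] := Polynomial.Chebyshev.T ℝ n with hT
  have hσ2 : (σ : ℝ) ^ 2 ≠ 0 := by positivity
  set c : ℝ := (Real.sqrt (2 * π) * σ)⁻¹ with hc
  -- continuity of f
  have hfc : Continuous f := by
    have : Continuous fun x : ℝ => c * Real.exp (-(x - m) ^ 2 / (2 * σ ^ 2)) := by
      fun_prop
    exact this.congr fun x => (hf x).symm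
  -- derivative of f
  have hderiv : ∀ x : ℝ, HasDerivAt f (f x * ((m - x) / σ ^ 2)) x := by
    intro x
    have h1 : HasDerivAt (fun x : ℝ => -(x - m) ^ 2 / (2 * σ ^ 2)) (-(x - m) / σ ^ 2) x := by
      have h0 : HasDerivAt (fun x : ℝ => (x - m)) 1 x := (hasDerivAt_id x).sub_const m
      have h2 := (h0.pow 2).neg.div_const (2 * σ ^ 2)
      refine h2.congr_deriv ?_
      field_simp
      ring
    have h3 := (h1.exp.const_mul c)
    have h4 : HasDerivAt (fun x : ℝ => c * Real.exp (-(x - m) ^ 2 / (2 * σ ^ 2)))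
        (f x * ((m - x) / σ ^ 2)) x := by
      refine h3.congr_deriv ?_
      rw [hf x]
      ring
    exact h4.congr_of_eventuallyEq (Filter.Eventually.of_forall fun y => hf y)
  -- interval integral conversions
  have hle : (-1 : ℝ) ≤ 1 := by norm_num
  have hIcc : ∀ g : ℝ → ℝ, (∫ x in Set.Icc (-1 : ℝ) 1, g x) = ∫ x in (-1 : ℝ)..1, g x := by
    intro g
    rw [intervalIntegral.integral_of_le hle, MeasureTheory.integral_Icc_eq_integral_Ioc]
  -- integrability
  have hTcont : Continuous fun x : ℝ => T.eval x := T.continuous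
  have hTdcont : Continuous fun x : ℝ => (derivative T).eval x := (derivative T).continuous
  have hint1 : IntervalIntegrable (fun x : ℝ => (derivative T).eval x)
      volume (-1 : ℝ) 1 := hTdcont.intervalIntegrable _ _
  have hint2 : IntervalIntegrable (fun x : ℝ => f x * ((m - x) / σ ^ 2))
      volume (-1 : ℝ) 1 := by
    apply Continuous.intervalIntegrable
    fun_prop
  -- integration by parts
  have hibp : (∫ x in (-1 : ℝ)..1, T.eval x * (f x * ((m - x) / σ ^ 2)))
      = T.eval 1 * f 1 - T.eval (-1) * f (-1)
        - ∫ x in (-1 : ℝ)..1, (derivative T).eval x * f x := by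
    exact intervalIntegral.integral_mul_deriv_eq_deriv_mul
      (fun x _ => T.hasDerivAt x) (fun x _ => hderiv x) hint1 hint2
  -- pointwise rewriting of main integrand
  have hpt : ∀ x : ℝ, x * T.eval x * f x
      = m * (T.eval x * f x) - σ ^ 2 * (T.eval x * (f x * ((m - x) / σ ^ 2))) := by
    intro x
    field_simp
    ring
  rw [hIcc, hμn, hμn', hIcc, hIcc]
  calc (∫ x in (-1 : ℝ)..1, x * T.eval x * f x)
      = ∫ x in (-1 : ℝ)..1,
          (m * (T.eval x * f x) - σ ^ 2 * (T.eval x * (f x * ((m - x) / σ ^ 2)))) := by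
        exact intervalIntegral.integral_congr fun x _ => hpt x
    _ = (∫ x in (-1 : ℝ)..1, m * (T.eval x * f x))
          - ∫ x in (-1 : ℝ)..1, σ ^ 2 * (T.eval x * (f x * ((m - x) / σ ^ 2))) := by
        apply intervalIntegral.integral_sub
        · apply Continuous.intervalIntegrable; fun_prop
        · apply Continuous.intervalIntegrable; fun_prop
    _ = m * (∫ x in (-1 : ℝ)..1, T.eval x * f x)
          - σ ^ 2 * ∫ x in (-1 : ℝ)..1, T.eval x * (f x * ((m - x) / σ ^ 2)) := by
        rw [intervalIntegral.integral_const_mul, intervalIntegral.integral_const_mul]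
    _ = m * (∫ x in (-1 : ℝ)..1, T.eval x * f x)
          - σ ^ 2 * (T.eval 1 * f 1 - T.eval (-1) * f (-1)
            - ∫ x in (-1 : ℝ)..1, (derivative T).eval x * f x) := by rw [hibp]
end

section
/- Let Y ~ N(μ,σ²) with density f and distribution function F. The truncated generalized moments μ_n := E[T_n(Y)·1_{[−1,1]}(Y)] satisfy, for n ≥ 1, the recursion μ_{n+1} = 2μ·μ_n − 2σ²·( f(1) − f(−1)·T_n(−1) − 2n·Σ'_{j=0}^{n−1} μ_j·1_{(n+j) mod 2 = 1} ) − μ_{n−1}, with starting values μ_0 = F(1)−F(−1) and μ_1 = μ·μ_0 − σ²·(f(1)−f(−1)), where Σ' indicates the j=0 term is multiplied by 1/2. -/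
open Real MeasureTheory Polynomial Finset

lemma chebU_add_two' (n : ℤ) :
    Polynomial.Chebyshev.U ℝ (n + 2)
      = Polynomial.Chebyshev.U ℝ n + 2 * Polynomial.Chebyshev.T ℝ (n + 2) := by
  have h := Polynomial.Chebyshev.T_eq_U_sub_X_mul_U ℝ (n + 2)
  rw [show (n + 2 - 1 : ℤ) = n + 1 by ring] at h
  linear_combination (-1 : ℝ[X]) * Polynomial.Chebyshev.U_add_two ℝ n - 2 * h

lemma chebU_eval_sum (k : ℕ) (x : ℝ) :
    (Polynomial.Chebyshev.U ℝ k).eval x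
      = ∑ j ∈ Finset.range (k + 1),
          (if (k + j) % 2 = 0 then (if j = 0 then (1 : ℝ) else 2) else 0) *
            (Polynomial.Chebyshev.T ℝ j).eval x := by
  induction k using Nat.twoStepInduction with
  | zero => simp [Polynomial.Chebyshev.U_zero, Polynomial.Chebyshev.T_zero]
  | one =>
    rw [Finset.sum_range_succ, Finset.sum_range_one]
    norm_num [Polynomial.Chebyshev.U_one, Polynomial.Chebyshev.T_one]
  | more k ih _ =>
    have hcast : ((k + 2 : ℕ) : ℤ) = (k : ℤ) + 2 := by push_cast; ring
    rw [hcast, chebU_add_two', Finset.sum_range_succ, Finset.sum_range_succ]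
    have h1 : ((k + 2 + (k + 1)) % 2 : ℕ) = 1 := by omega
    have h2 : ((k + 2 + (k + 2)) % 2 : ℕ) = 0 := by omega
    rw [h1, h2]
    simp only [Polynomial.eval_add, Polynomial.eval_mul, Polynomial.eval_ofNat]
    rw [ih]
    have hsum : ∀ j ∈ Finset.range (k + 1),
        (if (k + 2 + j) % 2 = 0 then (if j = 0 then (1 : ℝ) else 2) else 0) *
            (Polynomial.Chebyshev.T ℝ j).eval x
          = (if (k + j) % 2 = 0 then (if j = 0 then (1 : ℝ) else 2) else 0) *
            (Polynomial.Chebyshev.T ℝ j).eval x := by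
      intro j _
      have : (k + 2 + j) % 2 = (k + j) % 2 := by omega
      rw [this]
    rw [Finset.sum_congr rfl hsum]
    norm_num [hcast]

theorem normal_truncated_chebyshev_moment_recursion (m σ : ℝ) (hσ : 0 < σ)
    (f : ℝ → ℝ) (F : ℝ → ℝ)
    (hf : ∀ x, f x = (Real.sqrt (2 * π) * σ)⁻¹ * Real.exp (-(x - m) ^ 2 / (2 * σ ^ 2)))
    (hF : ∀ x, F x = ∫ t in Set.Iic x, f t)
    (μc : ℕ → ℝ)
    (hμc : ∀ j, μc j = ∫ x in Set.Icc (-1 : ℝ) 1, (Polynomial.Chebyshev.T ℝ j).eval x * f x) :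
    μc 0 = F 1 - F (-1) ∧
    μc 1 = m * μc 0 - σ ^ 2 * (f 1 - f (-1)) ∧
    ∀ n : ℕ, 1 ≤ n →
      μc (n + 1) = 2 * m * μc n -
        2 * σ ^ 2 * (f 1 - f (-1) * (Polynomial.Chebyshev.T ℝ n).eval (-1) -
          2 * (n : ℝ) * ∑ j ∈ Finset.range n,
            (if j = 0 then (1 : ℝ) / 2 else 1) * μc j *
              (if (n + j) % 2 = 1 then (1 : ℝ) else 0)) -
        μc (n - 1) := by
  have hσ2 : (0 : ℝ) < σ ^ 2 := by positivity
  have hfeq : f = fun x => (Real.sqrt (2 * π) * σ)⁻¹ *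
      Real.exp (-(x - m) ^ 2 / (2 * σ ^ 2)) := funext hf
  have hcont : Continuous f := by
    rw [hfeq]; fun_prop
  -- derivative of f
  have hfd : ∀ x, HasDerivAt f ((m - x) / σ ^ 2 * f x) x := by
    intro x
    have hb : HasDerivAt (fun y : ℝ => y - m) 1 x := (hasDerivAt_id x).sub_const m
    have hsq := hb.pow 2
    have hneg := (hsq.neg).div_const (2 * σ ^ 2)
    have hexp := hneg.exp
    have hc := hexp.const_mul ((Real.sqrt (2 * π) * σ)⁻¹)
    simp only [Pi.pow_apply, Pi.neg_apply] at hc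
    rw [← hfeq] at hc
    refine hc.congr_deriv ?_
    rw [hf x]
    field_simp
    ring
  have hcontd : Continuous fun x => (m - x) / σ ^ 2 * f x := by fun_prop
  -- interval-integral form of μc
  have hμI : ∀ j : ℕ, μc j = ∫ x in (-1 : ℝ)..1, (Polynomial.Chebyshev.T ℝ j).eval x * f x := by
    intro j
    rw [hμc j, MeasureTheory.integral_Icc_eq_integral_Ioc,
      ← intervalIntegral.integral_of_le (by norm_num : (-1 : ℝ) ≤ 1)]
  -- integrability helpers
  have hII : ∀ g : ℝ → ℝ, Continuous g → IntervalIntegrable g volume (-1) 1 :=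
    fun g hg => hg.intervalIntegrable _ _
  have hcontp : ∀ p : ℝ[X], Continuous fun x : ℝ => p.eval x * f x :=
    fun p => (p.continuous.mul hcont)
  -- FTC for f'
  have hftc : ∫ x in (-1 : ℝ)..1, (m - x) / σ ^ 2 * f x = f 1 - f (-1) :=
    intervalIntegral.integral_eq_sub_of_hasDerivAt (fun x _ => hfd x) (hII _ hcontd)
  -- pointwise identity
  have hxf : ∀ x, x * f x = m * f x - σ ^ 2 * ((m - x) / σ ^ 2 * f x) := by
    intro x; field_simp; ring
  -- integration by parts master lemma
  have hIBP : ∀ p : ℝ[X], ∫ x in (-1 : ℝ)..1, p.eval x * (x * f x)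
      = m * (∫ x in (-1 : ℝ)..1, p.eval x * f x) -
        σ ^ 2 * (p.eval 1 * f 1 - p.eval (-1) * f (-1) -
          ∫ x in (-1 : ℝ)..1, p.derivative.eval x * f x) := by
    intro p
    have h1 : ∀ x, p.eval x * (x * f x)
        = m * (p.eval x * f x) - σ ^ 2 * (p.eval x * ((m - x) / σ ^ 2 * f x)) := by
      intro x; rw [hxf x]; ring
    simp_rw [h1]
    rw [intervalIntegral.integral_sub
        (show IntervalIntegrable (fun x => m * (p.eval x * f x)) volume (-1) 1 from
          (continuous_const.mul (hcontp p)).intervalIntegrable _ _)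
        (show IntervalIntegrable (fun x => σ ^ 2 * (p.eval x * ((m - x) / σ ^ 2 * f x)))
          volume (-1) 1 from
          (continuous_const.mul ((p.continuous).mul hcontd)).intervalIntegrable _ _),
      intervalIntegral.integral_const_mul, intervalIntegral.integral_const_mul]
    have hparts := intervalIntegral.integral_mul_deriv_eq_deriv_mul
      (u := fun x => p.eval x) (u' := fun x => p.derivative.eval x)
      (v := f) (v' := fun x => (m - x) / σ ^ 2 * f x)
      (fun x _ => p.hasDerivAt x) (fun x _ => hfd x)
      (hII _ (p.derivative.continuous)) (hII _ hcontd)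
    rw [hparts]
  -- evaluate T at 1
  have hT1 : ∀ n : ℤ, (Polynomial.Chebyshev.T ℝ n).eval 1 = 1 := by
    intro n
    have := Polynomial.Chebyshev.T_real_cos (θ := 0) (n := n)
    simpa using this
  -- U integral in terms of μc
  have hUint : ∀ k : ℕ, ∫ x in (-1 : ℝ)..1, (Polynomial.Chebyshev.U ℝ k).eval x * f x
      = ∑ j ∈ Finset.range (k + 1),
          (if (k + j) % 2 = 0 then (if j = 0 then (1 : ℝ) else 2) else 0) * μc j := by
    intro k
    have h1 : ∀ x : ℝ, (Polynomial.Chebyshev.U ℝ k).eval x * f x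
        = ∑ j ∈ Finset.range (k + 1),
            (if (k + j) % 2 = 0 then (if j = 0 then (1 : ℝ) else 2) else 0) *
              ((Polynomial.Chebyshev.T ℝ j).eval x * f x) := by
      intro x
      rw [chebU_eval_sum, Finset.sum_mul]
      exact Finset.sum_congr rfl fun j _ => by ring
    simp_rw [h1]
    rw [intervalIntegral.integral_finset_sum]
    · exact Finset.sum_congr rfl fun j _ => by
        rw [intervalIntegral.integral_const_mul, hμI j]
    · exact fun j _ => (continuous_const.mul (hcontp _)).intervalIntegrable _ _
  -- part 1
  have hμ0 : μc 0 = F 1 - F (-1) := by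
    have hint : Integrable f := by
      rw [hfeq]
      have h1 : Integrable (fun x : ℝ => Real.exp (-(2 * σ ^ 2)⁻¹ * x ^ 2)) :=
        integrable_exp_neg_mul_sq (by positivity)
      have h2 := (h1.comp_sub_right m).const_mul ((Real.sqrt (2 * π) * σ)⁻¹)
      refine h2.congr (Filter.Eventually.of_forall fun x => ?_)
      have harg : -(2 * σ ^ 2)⁻¹ * (x - m) ^ 2 = -(x - m) ^ 2 / (2 * σ ^ 2) := by ring
      simp only [harg]
    rw [hF, hF, intervalIntegral.integral_Iic_sub_Iic hint.integrableOn hint.integrableOn,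
      hμI 0]
    simp [Polynomial.Chebyshev.T_zero]
  refine ⟨hμ0, ?_, ?_⟩
  -- part 2
  · have h1 : μc 1 = ∫ x in (-1 : ℝ)..1, (1 : ℝ[X]).eval x * (x * f x) := by
      rw [hμI 1]
      simp [Polynomial.Chebyshev.T_one]
    rw [h1, hIBP 1]
    simp only [Polynomial.eval_one, Polynomial.derivative_one, Polynomial.eval_zero,
      zero_mul, intervalIntegral.integral_zero, one_mul, sub_zero]
    rw [hμI 0]
    simp only [Nat.cast_zero, Polynomial.Chebyshev.T_zero, Polynomial.eval_one, one_mul]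
  -- part 3
  · intro n hn
    obtain ⟨k, rfl⟩ : ∃ k, n = k + 1 := ⟨n - 1, (Nat.succ_pred_eq_of_pos hn).symm⟩
    have hcast2 : ((k + 1 + 1 : ℕ) : ℤ) = (k : ℤ) + 2 := by push_cast; ring
    have hcast1 : ((k + 1 : ℕ) : ℤ) = (k : ℤ) + 1 := by push_cast; ring
    -- recurrence step
    have hTrec : Polynomial.Chebyshev.T ℝ ((k + 1 + 1 : ℕ) : ℤ)
        = 2 * Polynomial.X * Polynomial.Chebyshev.T ℝ ((k + 1 : ℕ) : ℤ)
          - Polynomial.Chebyshev.T ℝ (k : ℤ) := by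
      rw [hcast2, hcast1]
      exact Polynomial.Chebyshev.T_add_two ℝ k
    have hsplit : μc (k + 1 + 1)
        = 2 * (∫ x in (-1 : ℝ)..1,
            (Polynomial.Chebyshev.T ℝ ((k + 1 : ℕ) : ℤ)).eval x * (x * f x)) - μc k := by
      rw [hμI (k + 1 + 1), hTrec]
      have h1 : ∀ x : ℝ,
          (2 * Polynomial.X * Polynomial.Chebyshev.T ℝ ((k + 1 : ℕ) : ℤ)
            - Polynomial.Chebyshev.T ℝ (k : ℤ)).eval x * f x
          = 2 * ((Polynomial.Chebyshev.T ℝ ((k + 1 : ℕ) : ℤ)).eval x * (x * f x))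
            - (Polynomial.Chebyshev.T ℝ (k : ℤ)).eval x * f x := by
        intro x; simp only [Polynomial.eval_sub, Polynomial.eval_mul, Polynomial.eval_X,
          Polynomial.eval_ofNat]; ring
      simp_rw [h1]
      rw [intervalIntegral.integral_sub, intervalIntegral.integral_const_mul, hμI k]
      · exact (continuous_const.mul
          (((Polynomial.Chebyshev.T ℝ ((k + 1 : ℕ) : ℤ)).continuous).mul
            (continuous_id.mul hcont))).intervalIntegrable _ _
      · exact (hcontp _).intervalIntegrable _ _
    -- derivative of T (k+1)
    have hTd : (Polynomial.Chebyshev.T ℝ ((k + 1 : ℕ) : ℤ)).derivative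
        = (((k : ℤ) + 1 : ℤ) : ℝ[X]) * Polynomial.Chebyshev.U ℝ (k : ℤ) := by
      have h := Polynomial.Chebyshev.T_derivative_eq_U (R := ℝ) ((k : ℤ) + 1)
      rw [show ((k : ℤ) + 1 - 1) = (k : ℤ) by ring] at h
      rw [hcast1, h]
    have hTdint : ∫ x in (-1 : ℝ)..1,
        (Polynomial.Chebyshev.T ℝ ((k + 1 : ℕ) : ℤ)).derivative.eval x * f x
        = ((k : ℝ) + 1) * ∑ j ∈ Finset.range (k + 1),
            (if (k + j) % 2 = 0 then (if j = 0 then (1 : ℝ) else 2) else 0) * μc j := by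
      rw [← hUint k]
      have h1 : ∀ x : ℝ,
          (Polynomial.Chebyshev.T ℝ ((k + 1 : ℕ) : ℤ)).derivative.eval x * f x
          = ((k : ℝ) + 1) * ((Polynomial.Chebyshev.U ℝ (k : ℤ)).eval x * f x) := by
        intro x
        rw [hTd]
        simp only [Polynomial.eval_mul, Polynomial.eval_intCast]
        push_cast
        ring
      simp_rw [h1]
      rw [intervalIntegral.integral_const_mul]
    have hmain := hIBP (Polynomial.Chebyshev.T ℝ ((k + 1 : ℕ) : ℤ))
    rw [hT1, hTdint] at hmain
    -- now pure algebra plus sum manipulation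
    have hsum : ∑ j ∈ Finset.range (k + 1),
        (if (k + j) % 2 = 0 then (if j = 0 then (1 : ℝ) else 2) else 0) * μc j
        = 2 * ∑ j ∈ Finset.range (k + 1),
            (if j = 0 then (1 : ℝ) / 2 else 1) * μc j *
              (if (k + 1 + j) % 2 = 1 then (1 : ℝ) else 0) := by
      rw [Finset.mul_sum]
      refine Finset.sum_congr rfl fun j _ => ?_
      have hpar : ((k + 1 + j) % 2 = 1) = ((k + j) % 2 = 0) := by
        simp only [eq_iff_iff]; omega
      simp only [hpar]
      split_ifs <;> ring
    have hk1 : (k + 1 - 1 : ℕ) = k := by omega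
    rw [hk1, hsplit, hmain, hμI (k + 1), hsum]
    push_cast
    ring
end
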